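/- If U₁ is an exact block encoding of A₁ with ancilla register of dimension a₁ and U₂ is an exact block encoding of A₂ with ancilla register of dimension a₂, then the product (I_{a₂} ⊗ U₁)(U₂ extended to act on the combined space appropriately) yields a unitary that is an exact block encoding of A₁A₂ with ancilla dimension a₁·a₂. -/

import Mathlib

open Matrix Kronecker

lemma kron_one_unitary {m p : Type*} [Fintype m] [Fintype p] [DecidableEq m] [DecidableEq p]
    (U : Matrix p p ℂ) (hU : U ∈ Matrix.unitaryGroup p ℂ) :
    ((1 : Matrix m m ℂ) ⊗ₖ U) ∈ Matrix.unitaryGroup (m × p) ℂ := by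
  have h1 : star ((1 : Matrix m m ℂ) ⊗ₖ U) = (1 : Matrix m m ℂ) ⊗ₖ (star U) := by
    ext ⟨i, j⟩ ⟨k, l⟩
    simp [Matrix.kroneckerMap_apply, Matrix.conjTranspose_apply, Matrix.one_apply,
      apply_ite (starRingEnd ℂ), eq_comm]
  rw [Matrix.mem_unitaryGroup_iff, h1, ← Matrix.mul_kronecker_mul, mul_one,
    (Matrix.mem_unitaryGroup_iff).mp hU, Matrix.one_kronecker_one]

lemma submatrix_unitary {m p : Type*} [Fintype m] [Fintype p] [DecidableEq m] [DecidableEq p]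
    (A : Matrix m m ℂ) (hA : A ∈ Matrix.unitaryGroup m ℂ) (e : p ≃ m) :
    A.submatrix e e ∈ Matrix.unitaryGroup p ℂ := by
  rw [Matrix.mem_unitaryGroup_iff]
  have : star (A.submatrix e e) = (star A).submatrix e e := by
    simp [Matrix.star_eq_conjTranspose, Matrix.conjTranspose_submatrix]
  rw [this, Matrix.submatrix_mul_equiv, (Matrix.mem_unitaryGroup_iff).mp hA,
    Matrix.submatrix_one_equiv]

theorem block_encoding_product
    {a₁ a₂ n : Type*} [Fintype a₁] [Fintype a₂] [Fintype n]
    [DecidableEq a₁] [DecidableEq a₂] [DecidableEq n]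
    (U₁ : Matrix (a₁ × n) (a₁ × n) ℂ) (hU₁ : U₁ ∈ Matrix.unitaryGroup (a₁ × n) ℂ)
    (U₂ : Matrix (a₂ × n) (a₂ × n) ℂ) (hU₂ : U₂ ∈ Matrix.unitaryGroup (a₂ × n) ℂ)
    (z₁ : a₁) (z₂ : a₂)
    (B₁ : Matrix (a₁ × n) n ℂ) (hB₁ : B₁ = fun i j => if i = (z₁, j) then 1 else 0)
    (B₂ : Matrix (a₂ × n) n ℂ) (hB₂ : B₂ = fun i j => if i = (z₂, j) then 1 else 0)
    (A₁ A₂ : Matrix n n ℂ) (hA₁ : A₁ = B₁ᴴ * U₁ * B₁) (hA₂ : A₂ = B₂ᴴ * U₂ * B₂)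
    -- `U₁` extended to act on ancilla-1 and the system, identity on ancilla-2:
    (M₁ : Matrix ((a₁ × a₂) × n) ((a₁ × a₂) × n) ℂ)
    (hM₁ : M₁ = fun i j =>
      (if i.1.2 = j.1.2 then (1 : ℂ) else 0) * U₁ (i.1.1, i.2) (j.1.1, j.2))
    -- `U₂` extended to act on ancilla-2 and the system, identity on ancilla-1:
    (M₂ : Matrix ((a₁ × a₂) × n) ((a₁ × a₂) × n) ℂ)
    (hM₂ : M₂ = fun i j =>
      (if i.1.1 = j.1.1 then (1 : ℂ) else 0) * U₂ (i.1.2, i.2) (j.1.2, j.2))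
    -- combined ancilla zero state `|0⟩_{a₁} ⊗ |0⟩_{a₂}`:
    (B : Matrix ((a₁ × a₂) × n) n ℂ) (hB : B = fun i j => if i = ((z₁, z₂), j) then 1 else 0) :
    M₁ * M₂ ∈ Matrix.unitaryGroup ((a₁ × a₂) × n) ℂ ∧
    Bᴴ * (M₁ * M₂) * B = A₁ * A₂ := by
  constructor
  · let e₁ : ((a₁ × a₂) × n) ≃ (a₂ × (a₁ × n)) :=
      ⟨fun i => (i.1.2, (i.1.1, i.2)), fun i => ((i.2.1, i.1), i.2.2),
        fun i => rfl, fun i => rfl⟩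
    let e₂ : ((a₁ × a₂) × n) ≃ (a₁ × (a₂ × n)) :=
      ⟨fun i => (i.1.1, (i.1.2, i.2)), fun i => ((i.1, i.2.1), i.2.2),
        fun i => rfl, fun i => rfl⟩
    have hm₁ : M₁ = ((1 : Matrix a₂ a₂ ℂ) ⊗ₖ U₁).submatrix e₁ e₁ := by
      ext i j
      simp [hM₁, Matrix.kroneckerMap_apply, Matrix.one_apply, e₁]
    have hm₂ : M₂ = ((1 : Matrix a₁ a₁ ℂ) ⊗ₖ U₂).submatrix e₂ e₂ := by
      ext i j
      simp [hM₂, Matrix.kroneckerMap_apply, Matrix.one_apply, e₂]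
    exact mul_mem
      (hm₁ ▸ submatrix_unitary _ (kron_one_unitary U₁ hU₁) e₁)
      (hm₂ ▸ submatrix_unitary _ (kron_one_unitary U₂ hU₂) e₂)
  · ext x y
    rw [hA₁, hA₂]
    simp only [Matrix.mul_apply, Matrix.conjTranspose_apply]
    subst hB hB₁ hB₂ hM₁ hM₂
    simp [Matrix.mul_apply, Matrix.conjTranspose_apply, Fintype.sum_prod_type,
      apply_ite (starRingEnd ℂ), Prod.ext_iff, ite_and, mul_comm]
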